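/- For every n ≥ 1, the n-dimensional Lebesgue volume of the polytope A_n = {x ∈ ℝ^n : 0 ≤ x_i ≤ 1 for all i, and x_i + x_{i+1} ≤ 1 for 1 ≤ i ≤ n−1} equals E_n/n!; that is, the normalized volume of the CFN-MC polytope of the caterpillar tree with n+1 leaves is the Euler zig-zag number E_n. -/

import Mathlib

open MeasureTheory Set

/-- The polytope `A_n ⊆ ℝ^n` (the CFN-MC polytope of the caterpillar tree with `n+1`
leaves): `0 ≤ x_i ≤ 1` for all `i`, and `x_i + x_{i+1} ≤ 1` for `1 ≤ i ≤ n−1`.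
(Coordinates are 0-indexed by `Fin n`.) -/
def catPolytope (n : ℕ) : Set (Fin n → ℝ) :=
  {x | (∀ i, 0 ≤ x i ∧ x i ≤ 1) ∧
    ∀ i : Fin n, ∀ h : (i : ℕ) + 1 < n, x i + x ⟨(i : ℕ) + 1, h⟩ ≤ 1}

/-- The Euler zig-zag number `E_m`: the number of alternating permutations
`a₁ a₂ ⋯ a_m` of `{1, …, m}`, i.e. permutations with `a₁ < a₂ > a₃ < a₄ > ⋯`
(with `E₀ = 1`). -/
noncomputable def zigzag (m : ℕ) : ℕ :=
  Nat.card {σ : Equiv.Perm (Fin m) //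
    ∀ i : Fin m, ∀ h : (i : ℕ) + 1 < m,
      if (i : ℕ) % 2 = 0 then σ i < σ ⟨(i : ℕ) + 1, h⟩ else σ ⟨(i : ℕ) + 1, h⟩ < σ i}

attribute [local instance] Classical.propDecidable

namespace CatVolAux


variable {n : ℕ}

/-- The alternating (zigzag) predicate on permutations, matching `zigzag`. -/
def Alt (n : ℕ) (σ : Equiv.Perm (Fin n)) : Prop :=
  ∀ i : Fin n, ∀ h : (i : ℕ) + 1 < n,
    if (i : ℕ) % 2 = 0 then σ i < σ ⟨(i : ℕ) + 1, h⟩ else σ ⟨(i : ℕ) + 1, h⟩ < σ i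

/-- The zigzag region in the cube. -/
def B (n : ℕ) : Set (Fin n → ℝ) :=
  {y | (∀ i, 0 ≤ y i ∧ y i ≤ 1) ∧
    ∀ i : Fin n, ∀ h : (i : ℕ) + 1 < n,
      if (i : ℕ) % 2 = 0 then y i ≤ y ⟨(i : ℕ) + 1, h⟩ else y ⟨(i : ℕ) + 1, h⟩ ≤ y i}

/-- The open order simplex associated to a permutation. -/
def S {n : ℕ} (σ : Equiv.Perm (Fin n)) : Set (Fin n → ℝ) :=
  {y | (∀ i, 0 < y i ∧ y i < 1) ∧ ∀ i j : Fin n, σ i < σ j → y i < y j}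

/-- The null "bad" set. -/
def N (n : ℕ) : Set (Fin n → ℝ) :=
  (⋃ (i : Fin n) (j : Fin n) (_ : i ≠ j), {y | y i = y j}) ∪
    ⋃ (i : Fin n), ({y : Fin n → ℝ | y i = 0} ∪ {y | y i = 1})

lemma volume_N : volume (N n) = 0 := by
  refine measure_union_null ?_ ?_
  · refine measure_iUnion_null fun i => measure_iUnion_null fun j => measure_iUnion_null fun hij => ?_
    have hsub : {y : Fin n → ℝ | y i = y j} =
        (LinearMap.ker ((LinearMap.proj i : (Fin n → ℝ) →ₗ[ℝ] ℝ) - LinearMap.proj j) :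
          Submodule ℝ (Fin n → ℝ)) := by
      ext y
      simp [LinearMap.mem_ker, sub_eq_zero]
    rw [hsub]
    refine Measure.addHaar_submodule _ _ ?_
    intro htop
    have hmem : Pi.single i (1 : ℝ) ∈
        LinearMap.ker ((LinearMap.proj i : (Fin n → ℝ) →ₗ[ℝ] ℝ) - LinearMap.proj j) := by
      rw [htop]; exact Submodule.mem_top
    rw [LinearMap.mem_ker] at hmem
    simp [LinearMap.proj_apply, Pi.single_eq_same, Pi.single_eq_of_ne (Ne.symm hij),
      sub_eq_zero] at hmem
  · refine measure_iUnion_null fun i => measure_union_null ?_ ?_ <;>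
      · rw [volume_pi]; exact Measure.pi_hyperplane _ i _




noncomputable def rk (y : Fin n → ℝ) (i : Fin n) : ℕ := (Finset.univ.filter fun j => y j < y i).card

lemma rk_lt_n (y : Fin n → ℝ) (i : Fin n) : rk y i < n := by
  have hsub : (Finset.univ.filter fun j => y j < y i) ⊆ Finset.univ.erase i := by
    intro j hj
    rw [Finset.mem_filter] at hj
    refine Finset.mem_erase.mpr ⟨?_, Finset.mem_univ _⟩
    rintro rfl
    exact lt_irrefl _ hj.2
  calc rk y i ≤ (Finset.univ.erase i).card := Finset.card_le_card hsub
    _ < Finset.univ.card := Finset.card_erase_lt_of_mem (Finset.mem_univ i)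
    _ = n := by simp

lemma rk_strict {y : Fin n → ℝ} {i j : Fin n} (h : y i < y j) : rk y i < rk y j := by
  refine Finset.card_lt_card ?_
  have hsub : (Finset.univ.filter fun k => y k < y i) ⊆ Finset.univ.filter fun k => y k < y j := by
    intro k hk
    rw [Finset.mem_filter] at hk ⊢
    exact ⟨hk.1, hk.2.trans h⟩
  refine (Finset.ssubset_iff_of_subset hsub).mpr ⟨i, ?_, ?_⟩
  · simp [h]
  · simp

/-- rank permutation of an injective tuple -/
noncomputable def rkPerm (y : Fin n → ℝ) (hy : Function.Injective y) : Equiv.Perm (Fin n) :=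
  Equiv.ofBijective (fun i => (⟨rk y i, rk_lt_n y i⟩ : Fin n))
    (Finite.injective_iff_bijective.mp (by
      intro i j hij
      by_contra hne
      have hv : rk y i = rk y j := congrArg Fin.val hij
      rcases lt_trichotomy (y i) (y j) with h | h | h
      · exact absurd hv (Nat.ne_of_lt (rk_strict h))
      · exact hne (hy h)
      · exact absurd hv.symm (Nat.ne_of_lt (rk_strict h))))

lemma rkPerm_apply (y : Fin n → ℝ) (hy : Function.Injective y) (i : Fin n) :
    rkPerm y hy i = (⟨rk y i, rk_lt_n y i⟩ : Fin n) := rfl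

lemma rkPerm_lt_iff (y : Fin n → ℝ) (hy : Function.Injective y) (i j : Fin n) :
    rkPerm y hy i < rkPerm y hy j ↔ y i < y j := by
  rw [rkPerm_apply, rkPerm_apply, Fin.mk_lt_mk]
  constructor
  · intro h
    rcases lt_trichotomy (y i) (y j) with h' | h' | h'
    · exact h'
    · exact absurd (congrArg (rk y) (hy h')) (Nat.ne_of_lt h)
    · exact absurd h (Nat.lt_asymm (rk_strict h'))
  · exact rk_strict

lemma mem_S_rk {y : Fin n → ℝ} (hy : Function.Injective y) (hb : ∀ i, 0 < y i ∧ y i < 1) :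
    y ∈ S (rkPerm y hy) :=
  ⟨hb, fun i j h => (rkPerm_lt_iff y hy i j).mp h⟩

/-- In `S σ`, the strict order is exactly given by `σ`. -/
lemma S_lt_iff {y : Fin n → ℝ} {σ : Equiv.Perm (Fin n)} (hσ : y ∈ S σ) (i j : Fin n) :
    σ i < σ j ↔ y i < y j := by
  constructor
  · exact hσ.2 i j
  · intro h
    rcases lt_trichotomy (σ i) (σ j) with h' | h' | h'
    · exact h'
    · rcases σ.injective h' with rfl; exact absurd h (lt_irrefl _)
    · exact absurd (hσ.2 j i h') (lt_asymm h)

lemma card_perm_lt (σ : Equiv.Perm (Fin n)) (i : Fin n) :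
    (Finset.univ.filter fun j => σ j < σ i).card = (σ i : ℕ) := by
  rw [← Fin.card_Iio (σ i)]
  refine Finset.card_bij (fun j _ => σ j) ?_ ?_ ?_
  · intro j hj
    rw [Finset.mem_filter] at hj
    exact Finset.mem_Iio.mpr hj.2
  · intro a _ b _ hab
    exact σ.injective hab
  · intro k hk
    refine ⟨σ.symm k, ?_, by simp⟩
    rw [Finset.mem_filter]
    refine ⟨Finset.mem_univ _, ?_⟩
    simpa using Finset.mem_Iio.mp hk

lemma S_perm_eq {y : Fin n → ℝ} {σ τ : Equiv.Perm (Fin n)} (h1 : y ∈ S σ) (h2 : y ∈ S τ) :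
    σ = τ := by
  have key : ∀ ρ : Equiv.Perm (Fin n), y ∈ S ρ → ∀ i, (ρ i : ℕ) = rk y i := by
    intro ρ hρ i
    rw [← card_perm_lt ρ i, rk]
    congr 1
    ext j
    simp only [Finset.mem_filter, Finset.mem_univ, true_and]
    exact S_lt_iff hρ j i
  exact Equiv.ext fun i => Fin.ext (by rw [key σ h1 i, key τ h2 i])

lemma S_meas (σ : Equiv.Perm (Fin n)) : MeasurableSet (S σ) := by
  have hEq : S σ = (⋂ i, ({y : Fin n → ℝ | 0 < y i} ∩ {y | y i < 1})) ∩
      ⋂ (i) (j) (_ : σ i < σ j), {y : Fin n → ℝ | y i < y j} := by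
    ext y
    simp only [S, mem_setOf_eq, mem_inter_iff, mem_iInter]
  rw [hEq]
  refine MeasurableSet.inter ?_ ?_
  · exact MeasurableSet.iInter fun i =>
      (measurableSet_lt measurable_const (measurable_pi_apply i)).inter
        (measurableSet_lt (measurable_pi_apply i) measurable_const)
  · exact MeasurableSet.iInter fun i => MeasurableSet.iInter fun j =>
      MeasurableSet.iInter fun _ =>
        measurableSet_lt (measurable_pi_apply i) (measurable_pi_apply j)




lemma mp_comp (τ : Equiv.Perm (Fin n)) :
    MeasurePreserving (fun y : Fin n → ℝ => y ∘ ⇑τ) volume volume := by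
  have hm : Measurable (fun y : Fin n → ℝ => y ∘ ⇑τ) :=
    measurable_pi_iff.mpr fun i => measurable_pi_apply _
  refine ⟨hm, ?_⟩
  rw [volume_pi]
  refine (Measure.pi_eq fun s hs => ?_).symm
  rw [Measure.map_apply hm (MeasurableSet.univ_pi hs)]
  have hpre : (fun y : Fin n → ℝ => y ∘ ⇑τ) ⁻¹' (univ.pi s) =
      univ.pi fun j => s (τ.symm j) := by
    ext y
    simp only [mem_preimage, mem_pi, mem_univ, true_implies, Function.comp_apply]
    constructor
    · intro h j
      simpa using h (τ.symm j)
    · intro h i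
      simpa using h (τ i)
  rw [hpre, Measure.pi_pi]
  exact Equiv.prod_comp τ.symm fun i => volume (s i)

lemma S_preimage (σ : Equiv.Perm (Fin n)) :
    S σ = (fun y : Fin n → ℝ => y ∘ ⇑σ⁻¹) ⁻¹' S 1 := by
  ext y
  simp only [S, mem_preimage, mem_setOf_eq, Function.comp_apply, Equiv.Perm.coe_one, id_eq]
  constructor
  · rintro ⟨hb, hlt⟩
    refine ⟨fun i => hb _, fun i j hij => hlt _ _ ?_⟩
    simpa using hij
  · rintro ⟨hb, hlt⟩
    refine ⟨fun i => by simpa using hb (σ i), fun i j hij => ?_⟩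
    have := hlt (σ i) (σ j) hij
    simpa using this


lemma volume_S_const (σ : Equiv.Perm (Fin n)) :
    volume (S σ) = volume (S (1 : Equiv.Perm (Fin n))) := by
  rw [S_preimage σ]
  exact (mp_comp σ⁻¹).measure_preimage (S_meas 1).nullMeasurableSet

/-- the reflection map -/
def Tmap (n : ℕ) (y : Fin n → ℝ) : Fin n → ℝ :=
  fun i => if (i : ℕ) % 2 = 0 then y i else 1 - y i

lemma Tmap_mp : MeasurePreserving (Tmap n) volume volume := by
  have hf : ∀ i : Fin n, MeasurePreserving
      (fun t : ℝ => if (i : ℕ) % 2 = 0 then t else 1 - t) volume volume := by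
    intro i
    split_ifs
    · exact MeasurePreserving.id volume
    · simpa using Measure.measurePreserving_sub_left (volume : Measure ℝ) 1
  have := measurePreserving_pi (fun _ : Fin n => (volume : Measure ℝ))
    (fun _ => volume) hf
  rwa [← volume_pi] at this




lemma Tmap_preimage : Tmap n ⁻¹' catPolytope n = B n := by
  ext y
  simp only [mem_preimage, catPolytope, B, mem_setOf_eq, Tmap]
  constructor
  · rintro ⟨hb, hc⟩
    constructor
    · intro i
      have := hb i
      split_ifs at this with hp
      · exact this
      · constructor <;> linarith [this.1, this.2]
    · intro i h
      have hval : ((⟨(i : ℕ) + 1, h⟩ : Fin n) : ℕ) = (i : ℕ) + 1 := rfl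
      have hci := hc i h
      by_cases hp : (i : ℕ) % 2 = 0
      · have hp1 : ¬((⟨(i : ℕ) + 1, h⟩ : Fin n) : ℕ) % 2 = 0 := by rw [hval]; omega
        rw [if_pos hp, if_neg hp1] at hci
        rw [if_pos hp]
        linarith
      · have hp1 : ((⟨(i : ℕ) + 1, h⟩ : Fin n) : ℕ) % 2 = 0 := by rw [hval]; omega
        rw [if_neg hp, if_pos hp1] at hci
        rw [if_neg hp]
        linarith
  · rintro ⟨hb, hc⟩
    constructor
    · intro i
      have := hb i
      split_ifs with hp
      · exact this
      · constructor <;> linarith [this.1, this.2]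
    · intro i h
      have hval : ((⟨(i : ℕ) + 1, h⟩ : Fin n) : ℕ) = (i : ℕ) + 1 := rfl
      have hci := hc i h
      by_cases hp : (i : ℕ) % 2 = 0
      · have hp1 : ¬((⟨(i : ℕ) + 1, h⟩ : Fin n) : ℕ) % 2 = 0 := by rw [hval]; omega
        rw [if_pos hp] at hci
        rw [if_pos hp, if_neg hp1]
        linarith
      · have hp1 : ((⟨(i : ℕ) + 1, h⟩ : Fin n) : ℕ) % 2 = 0 := by rw [hval]; omega
        rw [if_neg hp] at hci
        rw [if_neg hp, if_pos hp1]
        linarith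

lemma cat_meas : MeasurableSet (catPolytope n) := by
  have hEq : catPolytope n = (⋂ i, ({x : Fin n → ℝ | 0 ≤ x i} ∩ {x | x i ≤ 1})) ∩
      ⋂ (i : Fin n) (h : (i : ℕ) + 1 < n), {x : Fin n → ℝ | x i + x ⟨(i : ℕ) + 1, h⟩ ≤ 1} := by
    ext x
    simp only [catPolytope, mem_setOf_eq, mem_inter_iff, mem_iInter]
  rw [hEq]
  refine MeasurableSet.inter ?_ ?_
  · exact MeasurableSet.iInter fun i =>
      (measurableSet_le measurable_const (measurable_pi_apply i)).inter
        (measurableSet_le (measurable_pi_apply i) measurable_const)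
  · exact MeasurableSet.iInter fun i => MeasurableSet.iInter fun h =>
      measurableSet_le ((measurable_pi_apply i).add (measurable_pi_apply (⟨(i : ℕ) + 1, h⟩ : Fin n))) measurable_const

end CatVolAux

namespace CatVolAux

lemma not_mem_N {y : Fin n → ℝ} (h : y ∉ N n) :
    Function.Injective y ∧ ∀ i, y i ≠ 0 ∧ y i ≠ 1 := by
  rw [N, mem_union, not_or] at h
  obtain ⟨h1, h2⟩ := h
  simp only [mem_iUnion, not_exists, mem_setOf_eq] at h1
  simp only [mem_iUnion, not_exists, mem_union, mem_setOf_eq, not_or] at h2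
  constructor
  · intro i j hij
    by_contra hne
    exact h1 i j hne hij
  · exact h2

lemma alt_rkPerm {y : Fin n → ℝ} (hy : Function.Injective y) (hB : y ∈ B n) :
    Alt n (rkPerm y hy) := by
  intro i h
  have hne : i ≠ (⟨(i : ℕ) + 1, h⟩ : Fin n) := by
    intro he
    have := congrArg Fin.val he
    simp only [Fin.val_mk] at this
    omega
  have hyne : y i ≠ y ⟨(i : ℕ) + 1, h⟩ := fun he => hne (hy he)
  have hbi := hB.2 i h
  split_ifs with hp
  · rw [if_pos hp] at hbi
    exact (rkPerm_lt_iff y hy _ _).mpr (lt_of_le_of_ne hbi hyne)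
  · rw [if_neg hp] at hbi
    exact (rkPerm_lt_iff y hy _ _).mpr (lt_of_le_of_ne hbi hyne.symm)

lemma S_subset_B {σ : Equiv.Perm (Fin n)} (hσ : Alt n σ) : S σ ⊆ B n := by
  intro y hy
  refine ⟨fun i => ⟨(hy.1 i).1.le, (hy.1 i).2.le⟩, fun i h => ?_⟩
  have hai := hσ i h
  split_ifs with hp
  · rw [if_pos hp] at hai
    exact (hy.2 _ _ hai).le
  · rw [if_neg hp] at hai
    exact (hy.2 _ _ hai).le

lemma zigzag_eq_card (n : ℕ) :
    zigzag n = (Finset.univ.filter fun σ => Alt n σ).card := by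
  have h0 : zigzag n = Nat.card {σ : Equiv.Perm (Fin n) // Alt n σ} := rfl
  rw [h0, Nat.card_eq_fintype_card, Fintype.card_subtype]

end CatVolAux

/-- For every `n ≥ 1`, the `n`-dimensional Lebesgue volume of `A_n`
equals `E_n/n!`; that is, the normalized volume of the CFN-MC polytope of the caterpillar
tree with `n+1` leaves is the Euler zig-zag number `E_n`. -/
theorem caterpillar_polytope_volume (n : ℕ) (hn : 1 ≤ n) :
    MeasureTheory.volume (catPolytope n) =
      (zigzag n : ENNReal) / (Nat.factorial n : ENNReal) := by
  have h1 : volume (catPolytope n) = volume (CatVolAux.B n) := by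
    rw [← CatVolAux.Tmap_preimage]
    exact (CatVolAux.Tmap_mp.measure_preimage CatVolAux.cat_meas.nullMeasurableSet).symm
  have sandwich : ∀ U V : Set (Fin n → ℝ), U ⊆ V → V ⊆ U ∪ CatVolAux.N n →
      volume V = volume U := by
    intro U V hUV hVU
    refine le_antisymm ?_ (measure_mono hUV)
    calc volume V ≤ volume (U ∪ CatVolAux.N n) := measure_mono hVU
      _ ≤ volume U + volume (CatVolAux.N n) := measure_union_le _ _
      _ = volume U := by rw [CatVolAux.volume_N, add_zero]
  have hdisj : ∀ s : Finset (Equiv.Perm (Fin n)),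
      (↑s : Set (Equiv.Perm (Fin n))).PairwiseDisjoint CatVolAux.S := by
    intro s σ _ τ _ hne
    rw [Function.onFun, Set.disjoint_left]
    intro y hyσ hyτ
    exact hne (CatVolAux.S_perm_eq hyσ hyτ)
  have hcube : volume (⋃ σ ∈ (Finset.univ : Finset (Equiv.Perm (Fin n))),
      CatVolAux.S σ) = 1 := by
    have hsub1 : (⋃ σ ∈ (Finset.univ : Finset (Equiv.Perm (Fin n))), CatVolAux.S σ) ⊆
        univ.pi fun _ : Fin n => Ioo (0:ℝ) 1 := by
      intro y hy
      simp only [mem_iUnion] at hy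
      obtain ⟨σ, _, hyσ⟩ := hy
      intro i _
      exact ⟨(hyσ.1 i).1, (hyσ.1 i).2⟩
    have hsub2 : (univ.pi fun _ : Fin n => Ioo (0:ℝ) 1) ⊆
        (⋃ σ ∈ (Finset.univ : Finset (Equiv.Perm (Fin n))), CatVolAux.S σ) ∪
          CatVolAux.N n := by
      intro y hy
      by_cases hN : y ∈ CatVolAux.N n
      · exact Or.inr hN
      · obtain ⟨hinj, _⟩ := CatVolAux.not_mem_N hN
        refine Or.inl ?_
        simp only [mem_iUnion]
        exact ⟨CatVolAux.rkPerm y hinj, Finset.mem_univ _,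
          CatVolAux.mem_S_rk hinj fun i =>
            ⟨(hy i (mem_univ i)).1, (hy i (mem_univ i)).2⟩⟩
    rw [← sandwich _ _ hsub1 hsub2, volume_pi_pi]
    simp [Real.volume_Ioo]
  have hfac : ((Nat.factorial n : ENNReal)) *
      volume (CatVolAux.S (1 : Equiv.Perm (Fin n))) = 1 := by
    have hsum : ∑ σ : Equiv.Perm (Fin n), volume (CatVolAux.S σ) = 1 := by
      rw [← measure_biUnion_finset (hdisj _) (fun σ _ => CatVolAux.S_meas σ)]
      exact hcube
    calc ((Nat.factorial n : ENNReal)) * volume (CatVolAux.S (1 : Equiv.Perm (Fin n)))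
        = (Finset.univ : Finset (Equiv.Perm (Fin n))).card •
            volume (CatVolAux.S (1 : Equiv.Perm (Fin n))) := by
          rw [Finset.card_univ, Fintype.card_perm, Fintype.card_fin, nsmul_eq_mul]
      _ = ∑ _σ : Equiv.Perm (Fin n), volume (CatVolAux.S (1 : Equiv.Perm (Fin n))) := by
          rw [Finset.sum_const]
      _ = ∑ σ : Equiv.Perm (Fin n), volume (CatVolAux.S σ) :=
          (Finset.sum_congr rfl fun σ _ => (CatVolAux.volume_S_const σ).symm)
      _ = 1 := hsum
  have hne : (Nat.factorial n : ENNReal) ≠ 0 := by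
    simp [Nat.factorial_ne_zero]
  have htop : (Nat.factorial n : ENNReal) ≠ ⊤ := ENNReal.natCast_ne_top _
  have hS1 : volume (CatVolAux.S (1 : Equiv.Perm (Fin n))) =
      ((Nat.factorial n : ENNReal))⁻¹ := by
    calc volume (CatVolAux.S (1 : Equiv.Perm (Fin n)))
        = ((Nat.factorial n : ENNReal)⁻¹ * (Nat.factorial n : ENNReal)) *
            volume (CatVolAux.S (1 : Equiv.Perm (Fin n))) := by
          rw [ENNReal.inv_mul_cancel hne htop, one_mul]
      _ = (Nat.factorial n : ENNReal)⁻¹ * (((Nat.factorial n : ENNReal)) *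
            volume (CatVolAux.S (1 : Equiv.Perm (Fin n)))) := by rw [mul_assoc]
      _ = (Nat.factorial n : ENNReal)⁻¹ := by rw [hfac, mul_one]
  have hBsub1 : (⋃ σ ∈ Finset.univ.filter (fun σ => CatVolAux.Alt n σ), CatVolAux.S σ) ⊆
      CatVolAux.B n := by
    intro y hy
    simp only [mem_iUnion] at hy
    obtain ⟨σ, hσ, hyσ⟩ := hy
    exact CatVolAux.S_subset_B (Finset.mem_filter.mp hσ).2 hyσ
  have hBsub2 : CatVolAux.B n ⊆
      (⋃ σ ∈ Finset.univ.filter (fun σ => CatVolAux.Alt n σ), CatVolAux.S σ) ∪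
        CatVolAux.N n := by
    intro y hy
    by_cases hN : y ∈ CatVolAux.N n
    · exact Or.inr hN
    · obtain ⟨hinj, hbd⟩ := CatVolAux.not_mem_N hN
      refine Or.inl ?_
      have hb : ∀ i, 0 < y i ∧ y i < 1 := fun i =>
        ⟨lt_of_le_of_ne (hy.1 i).1 (Ne.symm (hbd i).1), lt_of_le_of_ne (hy.1 i).2 (hbd i).2⟩
      simp only [mem_iUnion]
      exact ⟨CatVolAux.rkPerm y hinj,
        Finset.mem_filter.mpr ⟨Finset.mem_univ _, CatVolAux.alt_rkPerm hinj hy⟩,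
        CatVolAux.mem_S_rk hinj hb⟩
  have hBvol : volume (CatVolAux.B n) =
      ((Finset.univ.filter (fun σ => CatVolAux.Alt n σ)).card : ENNReal) *
        ((Nat.factorial n : ENNReal))⁻¹ := by
    rw [sandwich _ _ hBsub1 hBsub2,
      measure_biUnion_finset (hdisj _) (fun σ _ => CatVolAux.S_meas σ)]
    calc ∑ σ ∈ Finset.univ.filter (fun σ => CatVolAux.Alt n σ), volume (CatVolAux.S σ)
        = ∑ _σ ∈ Finset.univ.filter (fun σ => CatVolAux.Alt n σ),
            ((Nat.factorial n : ENNReal))⁻¹ :=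
          Finset.sum_congr rfl fun σ _ => by rw [CatVolAux.volume_S_const σ, hS1]
      _ = _ := by rw [Finset.sum_const, nsmul_eq_mul]
  rw [h1, hBvol, CatVolAux.zigzag_eq_card n, div_eq_mul_inv]
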